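/- The range of the embedding f ↦ (J_K f) ∘ σ_K of L^∞(K) into C_0([0, λ(K)]) is exactly Lip_0([0, λ(K)]), the Lipschitz functions vanishing at 0. In particular, for each G ∈ Lip_0([0, λ(K)]) with a.e. derivative g, one has G = (J_K f) ∘ σ_K where f = g ∘ π_K. -/

import Mathlib

open MeasureTheory Set

/-- Measure projection `π_K`. -/
noncomputable def piProj (K : Set ℝ) (x : ℝ) : ℝ :=
  (volume (Set.Icc (sInf K) x ∩ K)).toReal

/-- Left-endpoint selector `σ_K`. -/
noncomputable def sigmaSel (K : Set ℝ) (t : ℝ) : ℝ :=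
  sInf {x ∈ K | piProj K x = t}

/-- Primitive `J_K f`. -/
noncomputable def JPrim (K : Set ℝ) (f : ℝ → ℝ) (x : ℝ) : ℝ :=
  ∫ y in Set.Icc (sInf K) x ∩ K, f y

namespace Stmt13Aux

open Filter Function
open scoped Topology

variable {K : Set ℝ}

lemma icc_inter (hK : IsCompact K) (x : ℝ) :
    Icc (sInf K) x ∩ K = Iic x ∩ K := by
  ext y
  simp only [mem_inter_iff, mem_Icc, mem_Iic]
  exact ⟨fun h => ⟨h.1.2, h.2⟩, fun h => ⟨⟨csInf_le hK.bddBelow h.2, h.1⟩, h.2⟩⟩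

lemma piProj_eq (hK : IsCompact K) (x : ℝ) :
    piProj K x = (volume (Iic x ∩ K)).toReal := by
  rw [piProj, icc_inter hK]

lemma vol_Iic_ne_top (hK : IsCompact K) (x : ℝ) : volume (Iic x ∩ K) ≠ ⊤ :=
  ((measure_mono inter_subset_right).trans_lt hK.measure_lt_top).ne

lemma piProj_mono (hK : IsCompact K) : Monotone (piProj K) := by
  intro x y hxy
  rw [piProj_eq hK, piProj_eq hK]
  exact ENNReal.toReal_mono (vol_Iic_ne_top hK y)
    (measure_mono (inter_subset_inter_left _ (Iic_subset_Iic.2 hxy)))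

lemma vol_Ioc_eq (hK : IsCompact K) {x y : ℝ} (hxy : x ≤ y) :
    (volume (Ioc x y ∩ K)).toReal = piProj K y - piProj K x := by
  rw [piProj_eq hK, piProj_eq hK]
  have hd : Disjoint (Iic x ∩ K) (Ioc x y ∩ K) := by
    refine Disjoint.mono inter_subset_left inter_subset_left ?_
    simp [Set.disjoint_left]
    intro z hz hz'; linarith
  have hu : Iic y ∩ K = (Iic x ∩ K) ∪ (Ioc x y ∩ K) := by
    rw [← union_inter_distrib_right, Iic_union_Ioc_eq_Iic hxy]
  rw [hu, measure_union hd ((measurableSet_Ioc.inter hK.measurableSet)),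
    ENNReal.toReal_add (vol_Iic_ne_top hK x)
      (((measure_mono inter_subset_right).trans_lt hK.measure_lt_top).ne)]
  ring

lemma piProj_lipschitz (hK : IsCompact K) : LipschitzWith 1 (piProj K) := by
  refine LipschitzWith.of_dist_le_mul fun x y => ?_
  wlog hxy : x ≤ y generalizing x y
  · rw [dist_comm, dist_comm x y]; exact this _ _ (le_of_not_ge hxy)
  rw [Real.dist_eq, Real.dist_eq, NNReal.coe_one, one_mul,
    abs_of_nonpos (by linarith [piProj_mono hK hxy]), abs_of_nonpos (by linarith)]
  have := vol_Ioc_eq hK hxy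
  have hle : (volume (Ioc x y ∩ K)).toReal ≤ y - x :=
    ENNReal.toReal_le_of_le_ofReal (by linarith)
      ((measure_mono inter_subset_left).trans_eq Real.volume_Ioc)
  linarith

lemma piProj_continuous (hK : IsCompact K) : Continuous (piProj K) :=
  (piProj_lipschitz hK).continuous

lemma piProj_sInf (hK : IsCompact K) : piProj K (sInf K) = 0 := by
  rw [piProj_eq hK]
  have : Iic (sInf K) ∩ K ⊆ {sInf K} := by
    intro y hy
    exact le_antisymm hy.1 (csInf_le hK.bddBelow hy.2)
  simp [measure_mono_null this (measure_singleton _)]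

lemma piProj_sSup (hK : IsCompact K) (hne : K.Nonempty) :
    piProj K (sSup K) = (volume K).toReal := by
  have h : Iic (sSup K) ∩ K = K := by
    apply inter_eq_right.2
    intro y hy
    exact le_csSup hK.bddAbove hy
  rw [piProj_eq hK, h]

lemma piProj_nonneg (K : Set ℝ) (x : ℝ) : 0 ≤ piProj K x := ENNReal.toReal_nonneg

lemma piProj_le (hK : IsCompact K) (x : ℝ) : piProj K x ≤ (volume K).toReal := by
  rw [piProj_eq hK]
  exact ENNReal.toReal_mono hK.measure_lt_top.ne (measure_mono inter_subset_right)

lemma exists_piProj_eq (hK : IsCompact K) (hne : K.Nonempty) {t : ℝ}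
    (ht : t ∈ Icc 0 (volume K).toReal) : ∃ x ∈ K, piProj K x = t := by
  have hab : sInf K ≤ sSup K := csInf_le_csSup hne hK.bddBelow hK.bddAbove
  have h2 := intermediate_value_Icc hab (piProj_continuous hK).continuousOn
  rw [piProj_sInf hK, piProj_sSup hK hne] at h2
  obtain ⟨x, hx, hpx⟩ := h2 ht
  set S := K ∩ Icc (sInf K) x with hS
  have hSne : S.Nonempty := ⟨sInf K, hK.sInf_mem hne, le_rfl, hx.1⟩
  have hSc : IsCompact S := hK.inter_right isClosed_Icc
  have hcS : sSup S ∈ S := hSc.sSup_mem hSne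
  refine ⟨sSup S, hcS.1, ?_⟩
  have hcx : sSup S ≤ x := csSup_le hSne fun y hy => hy.2.2
  have heq : Iic (sSup S) ∩ K = Iic x ∩ K := by
    apply Subset.antisymm
    · exact inter_subset_inter_left _ (Iic_subset_Iic.2 hcx)
    · rintro y ⟨hy1, hy2⟩
      refine ⟨le_csSup hSc.bddAbove ⟨hy2, csInf_le hK.bddBelow hy2, hy1⟩, hy2⟩
  rw [piProj_eq hK, heq, ← piProj_eq hK, hpx]

lemma sep_eq (K : Set ℝ) (t : ℝ) :
    {x ∈ K | piProj K x = t} = K ∩ piProj K ⁻¹' {t} := by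
  ext y; simp [mem_sep_iff]

lemma sigmaSel_spec (hK : IsCompact K) (hne : K.Nonempty) {t : ℝ}
    (ht : t ∈ Icc 0 (volume K).toReal) :
    sigmaSel K t ∈ K ∧ piProj K (sigmaSel K t) = t := by
  have hclosed : IsClosed {x ∈ K | piProj K x = t} := by
    rw [sep_eq]
    exact hK.isClosed.inter (isClosed_singleton.preimage (piProj_continuous hK))
  obtain ⟨x, hx, hpx⟩ := exists_piProj_eq hK hne ht
  have hSne : {x ∈ K | piProj K x = t}.Nonempty := ⟨x, hx, hpx⟩
  have hbdd : BddBelow {x ∈ K | piProj K x = t} :=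
    hK.bddBelow.mono (sep_subset _ _)
  have := hclosed.csInf_mem hSne hbdd
  exact ⟨this.1, this.2⟩

lemma sigmaSel_mono (hK : IsCompact K) (hne : K.Nonempty) {s t : ℝ}
    (hs : s ∈ Icc 0 (volume K).toReal) (ht : t ∈ Icc 0 (volume K).toReal)
    (hst : s ≤ t) : sigmaSel K s ≤ sigmaSel K t := by
  by_contra h
  push_neg at h
  have h1 := piProj_mono hK h.le
  rw [(sigmaSel_spec hK hne ht).2, (sigmaSel_spec hK hne hs).2] at h1
  have : s = t := le_antisymm hst h1
  rw [this] at h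
  exact lt_irrefl _ h

lemma vol_sigma_Ioc (hK : IsCompact K) (hne : K.Nonempty) {s t : ℝ}
    (hs : s ∈ Icc 0 (volume K).toReal) (ht : t ∈ Icc 0 (volume K).toReal)
    (hst : s ≤ t) :
    (volume (Ioc (sigmaSel K s) (sigmaSel K t) ∩ K)).toReal = t - s := by
  rw [vol_Ioc_eq hK (sigmaSel_mono hK hne hs ht hst),
    (sigmaSel_spec hK hne ht).2, (sigmaSel_spec hK hne hs).2]

lemma null_diff (hK : IsCompact K) (hne : K.Nonempty) {t : ℝ}
    (ht : t ∈ Icc 0 (volume K).toReal) :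
    volume ((piProj K ⁻¹' Iic t \ Iic (sigmaSel K t)) ∩ K) = 0 := by
  have hclosed : IsClosed {x ∈ K | piProj K x = t} := by
    rw [sep_eq]
    exact hK.isClosed.inter (isClosed_singleton.preimage (piProj_continuous hK))
  have hScomp : IsCompact {x ∈ K | piProj K x = t} := by
    rw [sep_eq]
    exact hK.inter_right (isClosed_singleton.preimage (piProj_continuous hK))
  obtain ⟨x, hx, hpx⟩ := exists_piProj_eq hK hne ht
  have hSne : {x ∈ K | piProj K x = t}.Nonempty := ⟨x, hx, hpx⟩
  have hd := hScomp.sSup_mem hSne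
  set d := sSup {x ∈ K | piProj K x = t} with hdd
  have hsub : (piProj K ⁻¹' Iic t \ Iic (sigmaSel K t)) ∩ K
      ⊆ Ioc (sigmaSel K t) d ∩ K := by
    rintro y ⟨⟨hy1, hy2⟩, hy3⟩
    simp only [mem_preimage, mem_Iic] at hy1
    simp only [mem_Iic, not_le] at hy2
    have hpy : piProj K y = t := by
      refine le_antisymm hy1 ?_
      have := piProj_mono hK hy2.le
      rwa [(sigmaSel_spec hK hne ht).2] at this
    exact ⟨⟨hy2, le_csSup hScomp.bddAbove ⟨hy3, hpy⟩⟩, hy3⟩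
  refine measure_mono_null hsub ?_
  have h1 : (volume (Ioc (sigmaSel K t) d ∩ K)).toReal = 0 := by
    rcases le_or_gt (sigmaSel K t) d with hle | hlt
    · rw [vol_Ioc_eq hK hle, hd.2, (sigmaSel_spec hK hne ht).2, sub_self]
    · rw [Ioc_eq_empty (by exact fun h => absurd h (not_lt.2 hlt.le)), empty_inter]
      simp
  have h2 : volume (Ioc (sigmaSel K t) d ∩ K) ≠ ⊤ :=
    ((measure_mono inter_subset_right).trans_lt hK.measure_lt_top).ne
  exact (ENNReal.toReal_eq_zero_iff _).1 h1 |>.resolve_right h2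

lemma map_piProj (hK : IsCompact K) (hne : K.Nonempty) :
    Measure.map (piProj K) (volume.restrict K)
      = volume.restrict (Icc 0 (volume K).toReal) := by
  set M := (volume K).toReal with hM
  have hπm : Measurable (piProj K) := (piProj_continuous hK).measurable
  haveI : IsFiniteMeasure (volume.restrict K) := by
    constructor
    rw [Measure.restrict_apply_univ]
    exact hK.measure_lt_top
  haveI : IsFiniteMeasure (Measure.map (piProj K) (volume.restrict K)) :=
    Measure.isFiniteMeasure_map _ _
  refine Measure.ext_of_Iic _ _ fun r => ?_
  rw [Measure.map_apply hπm measurableSet_Iic,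
    Measure.restrict_apply measurableSet_Iic]
  rcases lt_or_ge r 0 with hr | hr
  · have h1 : piProj K ⁻¹' Iic r = ∅ := by
      ext x
      simp only [mem_preimage, mem_Iic, mem_empty_iff_false, iff_false, not_le]
      exact lt_of_lt_of_le hr (piProj_nonneg K x)
    have h2 : Iic r ∩ Icc 0 M = ∅ := by
      ext x
      simp only [mem_inter_iff, mem_Iic, mem_Icc, mem_empty_iff_false, iff_false,
        not_and]
      intro h1 h2
      intro; linarith
    rw [h1, h2]
    simp
  · set r' := min r M with hr'
    have hr'mem : r' ∈ Icc 0 M :=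
      ⟨le_min hr ENNReal.toReal_nonneg, min_le_right _ _⟩
    have hpre : piProj K ⁻¹' Iic r = piProj K ⁻¹' Iic r' := by
      ext x
      simp only [mem_preimage, mem_Iic, hr', le_min_iff]
      exact ⟨fun h => ⟨h, piProj_le hK x⟩, fun h => h.1⟩
    have hicc : Iic r ∩ Icc 0 M = Icc 0 r' := by
      ext x
      simp only [mem_inter_iff, mem_Iic, mem_Icc, hr', le_min_iff]
      tauto
    rw [hpre, hicc, Measure.restrict_apply (hπm measurableSet_Iic)]
    have hdecomp : piProj K ⁻¹' Iic r' ∩ K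
        = (Iic (sigmaSel K r') ∩ K) ∪ ((piProj K ⁻¹' Iic r' \ Iic (sigmaSel K r')) ∩ K) := by
      rw [← union_inter_distrib_right, union_diff_self, union_inter_distrib_right]
      apply Subset.antisymm
      · exact subset_union_right
      · rintro y (⟨hy1, hy2⟩ | hy)
        · refine ⟨?_, hy2⟩
          simp only [mem_preimage, mem_Iic] at hy1 ⊢
          calc piProj K y ≤ piProj K (sigmaSel K r') := piProj_mono hK hy1
            _ = r' := (sigmaSel_spec hK hne hr'mem).2
        · exact hy
    rw [hdecomp, measure_congr (union_ae_eq_left_of_ae_eq_empty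
      (ae_eq_empty.2 (null_diff hK hne hr'mem)))]
    have hfin : volume (Iic (sigmaSel K r') ∩ K) ≠ ⊤ := vol_Iic_ne_top hK _
    have htr : (volume (Iic (sigmaSel K r') ∩ K)).toReal = r' := by
      rw [← piProj_eq hK]
      exact (sigmaSel_spec hK hne hr'mem).2
    rw [← ENNReal.ofReal_toReal hfin, htr, Real.volume_Icc, sub_zero]

lemma integral_comp (hK : IsCompact K) (hne : K.Nonempty) {g : ℝ → ℝ}
    (hg : Measurable g) {t : ℝ} (ht : t ∈ Icc 0 (volume K).toReal) :
    ∫ y in Iic (sigmaSel K t) ∩ K, g (piProj K y) = ∫ u in Icc 0 t, g u := by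
  set M := (volume K).toReal with hM
  have hπm : Measurable (piProj K) := (piProj_continuous hK).measurable
  have h1 : volume.restrict (Iic (sigmaSel K t) ∩ K)
      = (volume.restrict K).restrict (Iic (sigmaSel K t)) :=
    (Measure.restrict_restrict measurableSet_Iic).symm
  have h2 : (volume.restrict K).restrict (Iic (sigmaSel K t))
      = (volume.restrict K).restrict (piProj K ⁻¹' Iic t) := by
    apply Measure.restrict_congr_set
    rw [MeasureTheory.ae_eq_set]
    constructor
    · have hempty : Iic (sigmaSel K t) \ piProj K ⁻¹' Iic t = ∅ := by
        ext x
        simp only [mem_diff, mem_Iic, mem_preimage, mem_empty_iff_false, iff_false,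
          not_and, not_not]
        intro hx
        calc piProj K x ≤ piProj K (sigmaSel K t) := piProj_mono hK hx
          _ = t := (sigmaSel_spec hK hne ht).2
      rw [hempty]
      simp
    · rw [Measure.restrict_apply ((hπm measurableSet_Iic).diff measurableSet_Iic)]
      exact null_diff hK hne ht
  calc ∫ y in Iic (sigmaSel K t) ∩ K, g (piProj K y)
      = ∫ y, g (piProj K y) ∂((volume.restrict K).restrict (piProj K ⁻¹' Iic t)) := by
        rw [← h2, ← h1]
    _ = ∫ u, g u ∂(Measure.map (piProj K) ((volume.restrict K).restrict (piProj K ⁻¹' Iic t))) :=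
        (integral_map hπm.aemeasurable hg.aestronglyMeasurable).symm
    _ = ∫ u, g u ∂((Measure.map (piProj K) (volume.restrict K)).restrict (Iic t)) := by
        rw [Measure.restrict_map hπm measurableSet_Iic]
    _ = ∫ u in Icc 0 t, g u := by
        have hs : Iic t ∩ Icc 0 (volume K).toReal = Icc 0 t := by
          ext x
          simp only [mem_inter_iff, mem_Iic, mem_Icc]
          constructor
          · rintro ⟨h1, h2, h3⟩; exact ⟨h2, h1⟩
          · rintro ⟨h1, h2⟩; exact ⟨h2, h1, h2.trans ht.2⟩
        rw [map_piProj hK hne, Measure.restrict_restrict measurableSet_Iic, hs]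

lemma mono_ftc {f f' : ℝ → ℝ} (hf : Monotone f) (hfc : Continuous f) {u v : ℝ}
    (huv : u ≤ v)
    (hderiv : ∀ᵐ x ∂(volume.restrict (Ioo u v)), HasDerivAt f (f' x) x) :
    ∫ x in Ioo u v, f' x ≤ f v - f u := by
  set F := hf.stieltjesFunction with hF
  have hFeq : ∀ x, F x = f x := fun x => by
    rw [hf.stieltjesFunction_eq]
    exact rightLim_eq_of_tendsto
      (hfc.continuousAt.tendsto.mono_left nhdsWithin_le_nhds)
  have hae : ∀ᵐ x ∂(volume.restrict (Ioo u v)),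
      f' x = (Measure.rnDeriv F.measure volume x).toReal := by
    filter_upwards [hderiv, ae_restrict_of_ae (StieltjesFunction.ae_hasDerivAt F)]
      with x h1 h2
    have h2' : HasDerivAt f ((Measure.rnDeriv F.measure volume x).toReal) x := by
      apply h2.congr_of_eventuallyEq
      filter_upwards with y
      exact (hFeq y).symm
    exact h1.unique h2'
  rw [integral_congr_ae hae]
  have hfin : F.measure (Ioo u v) ≠ ⊤ := by
    rw [StieltjesFunction.measure_Ioo]
    exact ENNReal.ofReal_ne_top
  have hle := Measure.setIntegral_toReal_rnDeriv_le (μ := F.measure) (ν := volume)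
    (s := Ioo u v) hfin
  refine hle.trans ?_
  rw [measureReal_def, StieltjesFunction.measure_Ioo]
  have hll : leftLim (F : ℝ → ℝ) v = f v := by
    have : (F : ℝ → ℝ) = f := funext hFeq
    rw [this]
    exact leftLim_eq_of_tendsto
      (hfc.continuousAt.tendsto.mono_left nhdsWithin_le_nhds)
  rw [hll, hFeq]
  exact le_of_eq (ENNReal.toReal_ofReal (sub_nonneg.2 (hf huv)))

lemma lipschitz_ftc {G g : ℝ → ℝ} {L : NNReal} (hGlip : LipschitzWith L G)
    (hg : Measurable g) {t : ℝ} (ht : 0 ≤ t)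
    (hderiv : ∀ᵐ x ∂(volume.restrict (Ioo 0 t)), HasDerivAt G (g x) x) :
    ∫ x in Ioo 0 t, g x = G t - G 0 := by
  -- a.e. bound on g
  have hbound : ∀ᵐ x ∂(volume.restrict (Ioo 0 t)), |g x| ≤ (L : ℝ) := by
    filter_upwards [hderiv] with x hx
    have hslope := hasDerivAt_iff_tendsto_slope.1 hx
    have habs : Tendsto (fun y => |slope G x y|) (𝓝[≠] x) (𝓝 |g x|) :=
      (continuous_abs.continuousAt.tendsto.comp hslope)
    refine le_of_tendsto habs ?_
    filter_upwards with y
    rcases eq_or_ne y x with rfl | hyx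
    · simp [slope]
    · have hpos : 0 < |y - x| := abs_pos.2 (sub_ne_zero.2 hyx)
      rw [slope_def_field, abs_div, div_le_iff₀ hpos]
      calc |G y - G x| = dist (G y) (G x) := (Real.dist_eq _ _).symm
        _ ≤ (L : ℝ) * dist y x := hGlip.dist_le_mul y x
        _ = (L : ℝ) * |y - x| := by rw [Real.dist_eq]
  have hint : IntegrableOn g (Ioo 0 t) volume := by
    refine Integrable.mono' (integrable_const (L : ℝ)) hg.aestronglyMeasurable ?_
    filter_upwards [hbound] with x hx
    rwa [Real.norm_eq_abs]
  -- monotone functions L x + G x and L x - G x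
  have hkey : ∀ x y : ℝ, x ≤ y → |G x - G y| ≤ (L : ℝ) * (y - x) := by
    intro x y hxy
    have h0 := hGlip.dist_le_mul x y
    rw [Real.dist_eq, Real.dist_eq] at h0
    calc |G x - G y| ≤ (L : ℝ) * |x - y| := h0
      _ = (L : ℝ) * (y - x) := by rw [abs_sub_comm, abs_of_nonneg (by linarith)]
  have hm1 : Monotone (fun x => (L : ℝ) * x + G x) := by
    intro x y hxy
    have h1 := (abs_le.1 (hkey x y hxy)).2
    simp only
    linarith
  have hm2 : Monotone (fun x => (L : ℝ) * x - G x) := by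
    intro x y hxy
    have h2 := (abs_le.1 (hkey x y hxy)).1
    simp only
    linarith
  have hc1 : Continuous (fun x => (L : ℝ) * x + G x) :=
    (continuous_const.mul continuous_id).add hGlip.continuous
  have hc2 : Continuous (fun x => (L : ℝ) * x - G x) :=
    (continuous_const.mul continuous_id).sub hGlip.continuous
  have hd1 : ∀ᵐ x ∂(volume.restrict (Ioo 0 t)),
      HasDerivAt (fun x => (L : ℝ) * x + G x) ((L : ℝ) + g x) x := by
    filter_upwards [hderiv] with x hx
    exact (((hasDerivAt_id x).const_mul (L : ℝ)).add hx).congr_deriv (by simp)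
  have hd2 : ∀ᵐ x ∂(volume.restrict (Ioo 0 t)),
      HasDerivAt (fun x => (L : ℝ) * x - G x) ((L : ℝ) - g x) x := by
    filter_upwards [hderiv] with x hx
    exact (((hasDerivAt_id x).const_mul (L : ℝ)).sub hx).congr_deriv (by simp)
  have h1 := mono_ftc hm1 hc1 ht hd1
  have h2 := mono_ftc hm2 hc2 ht hd2
  have hconst : IntegrableOn (fun _ : ℝ => (L : ℝ)) (Ioo 0 t) volume :=
    integrable_const _
  have hI1 : ∫ x in Ioo 0 t, ((L : ℝ) + g x) = (L : ℝ) * t + ∫ x in Ioo 0 t, g x := by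
    rw [integral_add hconst hint, setIntegral_const, measureReal_def, Real.volume_Ioo, smul_eq_mul,
      ENNReal.toReal_ofReal (by linarith), sub_zero, mul_comm]
  have hI2 : ∫ x in Ioo 0 t, ((L : ℝ) - g x) = (L : ℝ) * t - ∫ x in Ioo 0 t, g x := by
    rw [integral_sub hconst hint, setIntegral_const, measureReal_def, Real.volume_Ioo, smul_eq_mul,
      ENNReal.toReal_ofReal (by linarith), sub_zero, mul_comm]
  rw [hI1] at h1
  rw [hI2] at h2
  linarith

end Stmt13Aux

open Stmt13Aux

theorem stmt13 (K : Set ℝ) (hK : IsCompact K) (hpos : 0 < volume K) :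
    -- the image of `L^∞(K)` consists of Lipschitz functions vanishing at 0
    (∀ f : ℝ → ℝ, Measurable f → MemLp f ⊤ (volume.restrict K) →
      JPrim K f (sigmaSel K 0) = 0 ∧
      ∃ L : NNReal, LipschitzOnWith L (fun t => JPrim K f (sigmaSel K t))
        (Set.Icc (0 : ℝ) (volume K).toReal)) ∧
    -- conversely, every Lipschitz function vanishing at 0 is attained:
    -- if `g` is an a.e. derivative of `G`, then `G = (J_K (g ∘ π_K)) ∘ σ_K`
    (∀ G g : ℝ → ℝ, ∀ L : NNReal,
      LipschitzOnWith L G (Set.Icc (0 : ℝ) (volume K).toReal) → G 0 = 0 →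
      Measurable g →
      (∀ᵐ t ∂(volume.restrict (Set.Icc (0 : ℝ) (volume K).toReal)),
        HasDerivAt G (g t) t) →
      ∀ t ∈ Set.Icc (0 : ℝ) (volume K).toReal,
        G t = JPrim K (g ∘ piProj K) (sigmaSel K t)) := by
  have hne : K.Nonempty := by
    rcases eq_empty_or_nonempty K with rfl | h
    · simp at hpos
    · exact h
  set M := (volume K).toReal with hM
  have hMnn : (0 : ℝ) ≤ M := ENNReal.toReal_nonneg
  haveI : IsFiniteMeasure (volume.restrict K) := by
    constructor
    rw [Measure.restrict_apply_univ]
    exact hK.measure_lt_top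
  constructor
  · -- Part 1
    intro f hf hmem
    have h0mem : (0 : ℝ) ∈ Icc 0 M := ⟨le_rfl, hMnn⟩
    constructor
    · -- JPrim f (σ 0) = 0
      have hπ0 : piProj K (sigmaSel K 0) = 0 := (sigmaSel_spec hK hne h0mem).2
      rw [piProj_eq hK] at hπ0
      have hvol : volume (Iic (sigmaSel K 0) ∩ K) = 0 :=
        ((ENNReal.toReal_eq_zero_iff _).1 hπ0).resolve_right (vol_Iic_ne_top hK _)
      have hz : volume.restrict (Iic (sigmaSel K 0) ∩ K) = 0 :=
        Measure.restrict_eq_zero.2 hvol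
      rw [JPrim, icc_inter hK, hz]
      exact integral_zero_measure _
    · -- Lipschitz estimate
      set C := eLpNormEssSup f (volume.restrict K) with hC
      have hCfin : C ≠ ⊤ := by
        have h2 := hmem.2
        rw [eLpNorm_exponent_top] at h2
        exact h2.ne
      have hint : IntegrableOn f K volume := hmem.integrable le_top
      refine ⟨C.toNNReal, LipschitzOnWith.of_dist_le_mul fun s hs t ht => ?_⟩
      -- wlog s ≤ t
      have key : ∀ s ∈ Icc 0 M, ∀ t ∈ Icc 0 M, s ≤ t →
          dist (JPrim K f (sigmaSel K s)) (JPrim K f (sigmaSel K t))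
            ≤ C.toReal * (t - s) := by
        intro s hs t ht hst
        have hσ : sigmaSel K s ≤ sigmaSel K t := sigmaSel_mono hK hne hs ht hst
        set E := Ioc (sigmaSel K s) (sigmaSel K t) ∩ K with hE
        have hEK : E ⊆ K := inter_subset_right
        have hEm : MeasurableSet E := measurableSet_Ioc.inter hK.measurableSet
        have hEfin : volume E < ⊤ :=
          (measure_mono hEK).trans_lt hK.measure_lt_top
        have hsplit : ∫ y in Iic (sigmaSel K t) ∩ K, f y
            = (∫ y in Iic (sigmaSel K s) ∩ K, f y) + ∫ y in E, f y := by
          have hd : Disjoint (Iic (sigmaSel K s) ∩ K) E := by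
            refine Disjoint.mono inter_subset_left inter_subset_left ?_
            simp [Set.disjoint_left]
            intro z hz hz'; linarith
          have hu : Iic (sigmaSel K t) ∩ K = (Iic (sigmaSel K s) ∩ K) ∪ E := by
            rw [hE, ← union_inter_distrib_right, Iic_union_Ioc_eq_Iic hσ]
          rw [hu]
          exact setIntegral_union hd hEm (hint.mono_set inter_subset_right)
            (hint.mono_set hEK)
        have hbd : ‖∫ y in E, f y‖ ≤ C.toReal * (volume E).toReal := by
          refine norm_setIntegral_le_of_norm_le_const_ae hEfin ?_
          refine ae_restrict_of_ae_restrict_of_subset hEK ?_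
          filter_upwards [ae_le_eLpNormEssSup (f := f) (μ := volume.restrict K)]
            with y hy
          have := ENNReal.toReal_mono hCfin hy
          simpa using this
        have hvolE : (volume E).toReal = t - s := vol_sigma_Ioc hK hne hs ht hst
        rw [Real.dist_eq, JPrim, JPrim, icc_inter hK, icc_inter hK]
        rw [hsplit]
        rw [hvolE] at hbd
        rw [abs_sub_comm]
        simpa using hbd
      rcases le_total s t with hst | hst
      · refine (key s hs t ht hst).trans ?_
        have h5 : dist s t = t - s := by
          rw [Real.dist_eq, abs_sub_comm, abs_of_nonneg (by linarith)]
        rw [h5]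
        exact le_of_eq rfl
      · rw [dist_comm]
        refine (key t ht s hs hst).trans ?_
        have h5 : dist s t = s - t := by
          rw [Real.dist_eq, abs_of_nonneg (by linarith)]
        rw [h5]
        exact le_of_eq rfl
  · -- Part 2
    intro G g L hGlip hG0 hg hderiv t ht
    obtain ⟨G', hG'lip, hGG'⟩ := hGlip.extend_real
    have hIooM : Ioo (0 : ℝ) t ⊆ Icc 0 M := fun x hx => ⟨hx.1.le, hx.2.le.trans ht.2⟩
    have hderiv' : ∀ᵐ x ∂(volume.restrict (Ioo 0 t)), HasDerivAt G' (g x) x := by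
      have h1 : ∀ᵐ x ∂(volume.restrict (Ioo 0 t)), HasDerivAt G (g x) x :=
        ae_restrict_of_ae_restrict_of_subset hIooM hderiv
      filter_upwards [h1, ae_restrict_mem measurableSet_Ioo] with x hx hmemx
      have hxM : x ∈ Ioo (0 : ℝ) M := ⟨hmemx.1, lt_of_lt_of_le hmemx.2 ht.2⟩
      have hnb : Icc (0 : ℝ) M ∈ nhds x :=
        mem_nhds_iff.2 ⟨Ioo 0 M, Ioo_subset_Icc_self, isOpen_Ioo, hxM⟩
      refine HasDerivAt.congr_of_eventuallyEq hx ?_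
      filter_upwards [hnb] with y hy
      exact (hGG' hy).symm
    have hftc := lipschitz_ftc hG'lip hg ht.1 hderiv'
    have hG't : G' t = G t := (hGG' ht).symm
    have hG'0 : G' 0 = G 0 := (hGG' ⟨le_rfl, hMnn⟩).symm
    rw [hG't, hG'0, hG0, sub_zero] at hftc
    have hcomp := integral_comp hK hne hg ht
    rw [JPrim, icc_inter hK]
    have : ∫ y in Iic (sigmaSel K t) ∩ K, (g ∘ piProj K) y
        = ∫ y in Iic (sigmaSel K t) ∩ K, g (piProj K y) := rfl
    rw [this, hcomp, integral_Icc_eq_integral_Ioo, hftc]
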